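/- Let k ≥ 1 and n ≥ 1 be integers, let a₀, a₁, ..., a_k be positive integers with a = Σ_{i=0}^k a_i, let c be a positive integer, and set C_i = -a_i/c for i = 0, 1, ..., k and N = -a/c. Then for every (k+1)-tuple (x₀, x₁, ..., x_k) of nonnegative integers with Σ_{i=0}^k x_i = n, (∏_{i=0}^k C(C_i, x_i)) / C(N, n) = (n! / (x₀!·x₁!⋯x_k!)) · (∏_{i=0}^k ∏_{ℓ=1}^{x_i} (a_i + (ℓ−1)·c)) / (∏_{ℓ=1}^n (a + (ℓ−1)·c)); that is, the multivariate Pólya-Eggenberger distribution is a special case of the multivariate generalized hypergeometric distribution. -/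

import Mathlib

set_option maxHeartbeats 1000000


/-- The generalized binomial coefficient C(t, m) = (∏_{ℓ=1}^m (t - ℓ + 1)) / m!,
with C(t, 0) = 1, for a real number t and a nonnegative integer m. -/
noncomputable def genChoose (t : ℝ) (m : ℕ) : ℝ :=
  (∏ ℓ ∈ Finset.range m, (t - ℓ)) / (m.factorial : ℝ)

lemma genChoose_neg_div (a c : ℕ) (hc : 0 < c) (m : ℕ) :
    genChoose (-(a : ℝ) / c) m
      = (-1 / c) ^ m * (∏ ℓ ∈ Finset.range m, ((a : ℝ) + (ℓ : ℝ) * c)) / m.factorial := by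
  have hc' : (c : ℝ) ≠ 0 := Nat.cast_ne_zero.mpr hc.ne'
  unfold genChoose
  congr 1
  have h : ∏ ℓ ∈ Finset.range m, (-(a : ℝ) / c - ℓ)
      = ∏ ℓ ∈ Finset.range m, ((-1 / c : ℝ) * ((a : ℝ) + (ℓ : ℝ) * c)) := by
    refine Finset.prod_congr rfl fun ℓ _ => ?_
    field_simp
    ring
  rw [h, Finset.prod_mul_distrib, Finset.prod_const, Finset.card_range]

/-- Let a₀, ..., a_k be positive integers with a = Σ a_i, let c be a
positive integer, and set C_i = -a_i/c and N = -a/c. Then for every tuple of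
nonnegative integers with Σ x_i = n, (∏_{i=0}^k C(C_i, x_i)) / C(N, n) =
(n!/(x₀!⋯x_k!)) · (∏_{i=0}^k ∏_{ℓ=1}^{x_i} (a_i + (ℓ−1)·c)) / (∏_{ℓ=1}^n (a + (ℓ−1)·c));
the multivariate Pólya-Eggenberger distribution is a special case of the multivariate
generalized hypergeometric distribution. -/
theorem polya_is_genHyper (k n : ℕ) (hk : 1 ≤ k) (hn : 1 ≤ n)
    (a : Fin (k + 1) → ℕ) (ha : ∀ i, 0 < a i) (c : ℕ) (hc : 0 < c)
    (x : Fin (k + 1) → ℕ) (hx : (∑ i, x i) = n) :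
    (∏ i, genChoose (-(a i : ℝ) / c) (x i)) / genChoose (-((∑ i, a i : ℕ) : ℝ) / c) n
      = ((n.factorial : ℝ) / ∏ i, ((x i).factorial : ℝ)) *
        ((∏ i, ∏ ℓ ∈ Finset.range (x i), ((a i : ℝ) + (ℓ : ℝ) * c)) /
          (∏ ℓ ∈ Finset.range n, (((∑ i, a i : ℕ) : ℝ) + (ℓ : ℝ) * c))) := by
  have hc' : (c : ℝ) ≠ 0 := Nat.cast_ne_zero.mpr hc.ne'
  simp only [genChoose_neg_div _ _ hc]
  rw [Finset.prod_div_distrib, Finset.prod_mul_distrib, Finset.prod_pow_eq_pow_sum, hx]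
  have h1 : ((-1 : ℝ) / c) ^ n ≠ 0 := pow_ne_zero _ (div_ne_zero (by norm_num) hc')
  have hQ : (∏ ℓ ∈ Finset.range n, (((∑ i, a i : ℕ) : ℝ) + (ℓ : ℝ) * c)) ≠ 0 := by
    refine Finset.prod_ne_zero_iff.mpr fun ℓ _ => ?_
    have : (0:ℝ) < ((∑ i, a i : ℕ) : ℝ) := by
      have : 0 < ∑ i, a i := Finset.sum_pos (fun i _ => ha i) Finset.univ_nonempty
      exact_mod_cast this
    positivity
  have hF : (∏ i, ((x i).factorial : ℝ)) ≠ 0 :=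
    Finset.prod_ne_zero_iff.mpr fun i _ => Nat.cast_ne_zero.mpr (Nat.factorial_ne_zero _)
  have hn' : (n.factorial : ℝ) ≠ 0 := Nat.cast_ne_zero.mpr (Nat.factorial_ne_zero _)
  push_cast at hQ ⊢
  field_simp
  norm_num
  exact mul_div_mul_left _ _ (pow_ne_zero _ (neg_ne_zero.mpr (inv_ne_zero hc')))
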